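/- Let q = p^r, G = (ℤ_p)^r acting diagonally on edges of K_{q,q} (shores indexed by G). For any fixed edge e of K_{q,q}, the number of connected G-invariant subgraphs formed as unions of r+1 edge orbits that contain e is (q - p⁰)(q - p¹)⋯(q - p^{r-1}) / r!. -/

import Mathlib

/-- The bipartite graph on `G ⊕ G` whose edges are the elements of an
edge set `E ⊆ G × G`. -/
def bipGraph {G : Type*} (E : Set (G × G)) : SimpleGraph (G ⊕ G) where
  Adj v w := (∃ a b, (a, b) ∈ E ∧ v = Sum.inl a ∧ w = Sum.inr b) ∨
             (∃ a b, (a, b) ∈ E ∧ w = Sum.inl a ∧ v = Sum.inr b)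
  symm := ⟨fun v w h => h.elim (fun h => Or.inr h) (fun h => Or.inl h)⟩
  loopless := ⟨by rintro v (⟨a, b, _, rfl, h⟩ | ⟨a, b, _, rfl, h⟩) <;> simp at h⟩

/-- The `G`-orbit of the edge `e` under the diagonal action `g • (a,b) = (g+a, g+b)`. -/
def edgeOrbit {G : Type*} [Add G] (e : G × G) : Set (G × G) :=
  Set.range fun g : G => (g + e.1, g + e.2)

namespace Stmt10Aux

open Submodule

variable {G : Type*} [AddCommGroup G]

/-- The invariant edge set associated to a set of differences. -/
def EofD (D : Set G) : Set (G × G) := {x | x.2 - x.1 ∈ D}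

lemma mem_EofD {D : Set G} {x : G × G} : x ∈ EofD D ↔ x.2 - x.1 ∈ D := Iff.rfl

lemma mem_edgeOrbit_iff (a b : G) (x : G × G) :
    x ∈ edgeOrbit (a, b) ↔ x.2 - x.1 = b - a := by
  constructor
  · rintro ⟨g, rfl⟩; simp
  · intro h
    rw [sub_eq_iff_eq_add] at h
    refine ⟨x.1 - a, ?_⟩
    have h1 : x.1 - a + a = x.1 := by abel
    have h2 : x.1 - a + b = x.2 := by rw [h]; abel
    simp only [h1, h2]

lemma edgeOrbit_eq_set (a b : G) : edgeOrbit (a, b) = {x : G × G | x.2 - x.1 = b - a} :=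
  Set.ext (mem_edgeOrbit_iff a b)

/-- The set of differences of an invariant edge set, relative to the base edge `e`. -/
def DofE (e : G × G) (E : Set (G × G)) : Set G := {d | (e.1, e.1 + d) ∈ E}

lemma invariant_mem_iff {E : Set (G × G)}
    (hinv : ∀ e' ∈ E, ∀ g : G, (g + e'.1, g + e'.2) ∈ E) (e : G × G) (a b : G) :
    (a, b) ∈ E ↔ b - a ∈ DofE e E := by
  constructor
  · intro h
    have := hinv (a, b) h (e.1 - a)
    simp only at this
    have h1 : e.1 - a + a = e.1 := by abel
    have h2 : e.1 - a + b = e.1 + (b - a) := by abel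
    rw [h1, h2] at this
    exact this
  · intro h
    have := hinv (e.1, e.1 + (b - a)) h (a - e.1)
    simp only at this
    have h1 : a - e.1 + e.1 = a := by abel
    have h2 : a - e.1 + (e.1 + (b - a)) = b := by abel
    rw [h1, h2] at this
    exact this

lemma card_orbits (D : Set G) (c : G) :
    Nat.card {O : Set (G × G) // ∃ e' ∈ EofD D, O = edgeOrbit e'} = Nat.card D := by
  symm
  apply Nat.card_congr
  refine Equiv.ofBijective
    (fun d => ⟨edgeOrbit (c, c + d.1), ⟨(c, c + d.1), by simp [mem_EofD, d.2], rfl⟩⟩) ⟨?_, ?_⟩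
  · intro d d' h
    have h' := congrArg Subtype.val h
    simp only at h'
    have : (c, c + d.1) ∈ edgeOrbit (c, c + d'.1) := by
      rw [← h', mem_edgeOrbit_iff]
    rw [mem_edgeOrbit_iff] at this
    simp only [add_sub_cancel_left] at this
    exact Subtype.ext this
  · rintro ⟨O, e', he', rfl⟩
    refine ⟨⟨e'.2 - e'.1, he'⟩, Subtype.ext ?_⟩
    simp only
    rw [edgeOrbit_eq_set, ← Prod.mk.eta (p := e'), edgeOrbit_eq_set]
    simp

lemma bipGraph_adj (E : Set (G × G)) (v w : G ⊕ G) :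
    (bipGraph E).Adj v w ↔ ((∃ a b, (a, b) ∈ E ∧ v = Sum.inl a ∧ w = Sum.inr b) ∨
             (∃ a b, (a, b) ∈ E ∧ w = Sum.inl a ∧ v = Sum.inr b)) := Iff.rfl

lemma bipGraph_adj_inl_inr (E : Set (G × G)) (a b : G) :
    (bipGraph E).Adj (Sum.inl a) (Sum.inr b) ↔ (a, b) ∈ E := by
  constructor
  · rw [bipGraph_adj]
    rintro (⟨a', b', h, ha, hb⟩ | ⟨a', b', h, ha, hb⟩)
    · obtain rfl : a = a' := Sum.inl.inj ha
      obtain rfl : b = b' := Sum.inr.inj hb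
      exact h
    · exact absurd ha (by simp)
  · intro h
    exact (bipGraph_adj _ _ _).mpr (Or.inl ⟨a, b, h, rfl, rfl⟩)

lemma reachable_map {α β : Type*} {A : SimpleGraph α} {B : SimpleGraph β} (f : α → β)
    (h : ∀ u v, A.Adj u v → B.Adj (f u) (f v)) {u v : α} (hr : A.Reachable u v) :
    B.Reachable (f u) (f v) :=
  hr.map (⟨f, fun huv => h _ _ huv⟩ : A →g B)

lemma eq_of_reachable {α β : Type*} {A : SimpleGraph α} (f : α → β)
    (h : ∀ u v, A.Adj u v → f u = f v) {u v : α} (hr : A.Reachable u v) : f u = f v := by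
  obtain ⟨w⟩ := hr
  induction w with
  | nil => rfl
  | cons ha _ ih => exact (h _ _ ha).trans ih

section Conn

variable {p : ℕ} [NeZero p] {M : Type*} [AddCommGroup M] [Module (ZMod p) M]

lemma connected_iff_span (D : Set M) (d₀ : M) (hd₀ : d₀ ∈ D) :
    (bipGraph (EofD D)).Connected ↔ span (ZMod p) ((· - d₀) '' D) = ⊤ := by
  set BG := bipGraph (EofD D) with hBG
  have hadj : ∀ a b : M, BG.Adj (Sum.inl a) (Sum.inr b) ↔ b - a ∈ D := fun a b =>
    bipGraph_adj_inl_inr (EofD D) a b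
  constructor
  · -- connected → span = ⊤
    intro hconn
    set H := span (ZMod p) ((· - d₀) '' D) with hH
    set c : M ⊕ M → M ⧸ H := Sum.elim (fun a => Submodule.Quotient.mk a)
      (fun b => Submodule.Quotient.mk (b - d₀)) with hc
    have hstep : ∀ u v, BG.Adj u v → c u = c v := by
      rintro u v huv
      rcases (bipGraph_adj _ _ _).mp huv with ⟨a, b, hab, rfl, rfl⟩ | ⟨a, b, hab, rfl, rfl⟩
      · simp only [hc, Sum.elim_inl, Sum.elim_inr]
        rw [Submodule.Quotient.eq]
        have : (b - a) - d₀ ∈ H := subset_span ⟨b - a, hab, rfl⟩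
        have := H.neg_mem this
        have h2 : -((b - a) - d₀) = a - (b - d₀) := by abel
        rwa [h2] at this
      · simp only [hc, Sum.elim_inl, Sum.elim_inr]
        rw [Submodule.Quotient.eq]
        have : (b - a) - d₀ ∈ H := subset_span ⟨b - a, hab, rfl⟩
        have h2 : (b - a) - d₀ = (b - d₀) - a := by abel
        rwa [h2] at this
    rw [eq_top_iff]
    intro x _
    have hr := hconn.preconnected (Sum.inl x) (Sum.inl 0)
    have := eq_of_reachable c hstep hr
    simp only [hc, Sum.elim_inl] at this
    rw [Submodule.Quotient.eq] at this
    simpa using this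
  · -- span = ⊤ → connected
    intro hspan
    set R : Set M := {a | BG.Reachable (Sum.inl 0) (Sum.inl a)} with hR
    have htrans : ∀ (g : M) {x y : M}, BG.Reachable (Sum.inl x) (Sum.inl y) →
        BG.Reachable (Sum.inl (x + g)) (Sum.inl (y + g)) := by
      intro g x y hxy
      have := reachable_map (A := BG) (B := BG) (Sum.map (· + g) (· + g))
        (fun u v huv => ?_) hxy
      · exact this
      · rcases (bipGraph_adj _ _ _).mp huv with ⟨a, b, hab, rfl, rfl⟩ | ⟨a, b, hab, rfl, rfl⟩
        · exact (bipGraph_adj _ _ _).mpr (Or.inl ⟨a + g, b + g, by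
            rw [mem_EofD] at hab ⊢
            simpa using hab, rfl, rfl⟩)
        · exact (bipGraph_adj _ _ _).mpr (Or.inr ⟨a + g, b + g, by
            rw [mem_EofD] at hab ⊢
            simpa using hab, rfl, rfl⟩)
    have h0 : (0 : M) ∈ R := SimpleGraph.Reachable.refl _
    have hadd : ∀ {a b : M}, a ∈ R → b ∈ R → a + b ∈ R := by
      intro a b ha hb
      have := htrans a hb
      rw [zero_add] at this
      exact SimpleGraph.Reachable.trans ha (by rwa [add_comm b a] at this)
    have hneg : ∀ {a : M}, a ∈ R → -a ∈ R := by
      intro a ha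
      have := htrans (-a) ha
      rw [add_neg_cancel] at this
      exact (this.symm.trans (by rw [zero_add]))
    have hgen : ∀ d ∈ D, d - d₀ ∈ R := by
      intro d hd
      have h1 : BG.Adj (Sum.inl 0) (Sum.inr d) := (hadj 0 d).mpr (by simpa using hd)
      have h2 : BG.Adj (Sum.inl (d - d₀)) (Sum.inr d) := (hadj _ d).mpr (by
        have : d - (d - d₀) = d₀ := by abel
        rw [this]; exact hd₀)
      exact h1.reachable.trans h2.reachable.symm
    have hnsmul : ∀ (n : ℕ) {a : M}, a ∈ R → n • a ∈ R := by
      intro n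
      induction n with
      | zero => intro a _; simpa using h0
      | succ k ih => intro a ha; rw [succ_nsmul]; exact hadd (ih ha) ha
    have hsub : ∀ x ∈ span (ZMod p) ((· - d₀) '' D), x ∈ R := by
      intro x hx
      induction hx using Submodule.span_induction with
      | mem y hy => obtain ⟨d, hd, rfl⟩ := hy; exact hgen d hd
      | zero => exact h0
      | add y z _ _ hy hz => exact hadd hy hz
      | smul t y _ hy =>
        have : t • y = t.val • y := by
          conv_lhs => rw [← ZMod.natCast_rightInverse t]
          rw [Nat.cast_smul_eq_nsmul]
        rw [this]
        exact hnsmul t.val hy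
    have hall : ∀ a : M, a ∈ R := by
      intro a
      exact hsub a (by rw [hspan]; trivial)
    have hinr : ∀ b : M, BG.Reachable (Sum.inl 0) (Sum.inr b) := by
      intro b
      have h1 : BG.Reachable (Sum.inl 0) (Sum.inl (b - d₀)) := hall (b - d₀)
      have h2 : BG.Adj (Sum.inl (b - d₀)) (Sum.inr b) := (hadj _ _).mpr (by
        have : b - (b - d₀) = d₀ := by abel
        rw [this]; exact hd₀)
      exact h1.trans h2.reachable
    have hv : ∀ v : M ⊕ M, BG.Reachable (Sum.inl 0) v := by
      rintro (a | b)
      · exact hall a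
      · exact hinr b
    haveI : Nonempty (M ⊕ M) := ⟨Sum.inl 0⟩
    exact ⟨fun u v => (hv u).symm.trans (hv v)⟩

end Conn

end Stmt10Aux

open Stmt10Aux Submodule in
/-- For `q = p^r` and `G = (ℤ_p)^r` acting diagonally on the edges of
`K_{q,q}`, the number of connected `G`-invariant subgraphs formed as unions of `r+1`
edge orbits that contain a fixed edge `e` equals `(q-p⁰)(q-p¹)⋯(q-p^(r-1)) / r!`
(stated multiplied through by `r!`). -/
theorem stmt10 (p r : ℕ) [Fact p.Prime] (hr : 1 ≤ r)
    (e : (Fin r → ZMod p) × (Fin r → ZMod p)) :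
    (Nat.card {E : Set ((Fin r → ZMod p) × (Fin r → ZMod p)) //
        e ∈ E ∧
        (∀ e' ∈ E, ∀ g : Fin r → ZMod p, (g + e'.1, g + e'.2) ∈ E) ∧
        Nat.card {O : Set ((Fin r → ZMod p) × (Fin r → ZMod p)) //
          ∃ e' ∈ E, O = edgeOrbit e'} = r + 1 ∧
        (bipGraph E).Connected}) * r.factorial =
      ∏ i ∈ Finset.range r, (p ^ r - p ^ i) := by
  classical
  haveI : NeZero p := ⟨(Fact.out : p.Prime).ne_zero⟩
  have hV : True := trivial
  -- Step 1: edge sets ↔ difference sets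
  have step1 : Nat.card {E : Set ((Fin r → ZMod p) × (Fin r → ZMod p)) //
        e ∈ E ∧
        (∀ e' ∈ E, ∀ g : Fin r → ZMod p, (g + e'.1, g + e'.2) ∈ E) ∧
        Nat.card {O : Set ((Fin r → ZMod p) × (Fin r → ZMod p)) //
          ∃ e' ∈ E, O = edgeOrbit e'} = r + 1 ∧
        (bipGraph E).Connected} =
      Nat.card {D : Set (Fin r → ZMod p) // e.2 - e.1 ∈ D ∧ Nat.card D = r + 1 ∧
        span (ZMod p) ((· - (e.2 - e.1)) '' D) = ⊤} := by
    apply Nat.card_congr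
    refine ⟨fun x => ⟨DofE e x.1, ?_⟩, fun y => ⟨EofD y.1, ?_⟩, ?_, ?_⟩
    · obtain ⟨E, he, hinv, hcard, hconn⟩ := x
      have hchar := invariant_mem_iff hinv e
      have hE : E = EofD (DofE e E) := by
        ext x
        rw [mem_EofD, ← Prod.mk.eta (p := x)]
        exact hchar x.1 x.2
      refine ⟨?_, ?_, ?_⟩
      · have := (hchar e.1 e.2).mp (by rwa [Prod.mk.eta])
        exact this
      · rw [hE] at hcard
        rw [← card_orbits (DofE e E) e.1, hcard]
      · rw [hE] at hconn
        exact (connected_iff_span (DofE e E) (e.2 - e.1) ((hchar e.1 e.2).mp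
          (by rwa [Prod.mk.eta]))).mp hconn
    · obtain ⟨D, hd, hcard, hspan⟩ := y
      refine ⟨?_, ?_, ?_, ?_⟩
      · exact hd
      · intro e' _ g
        rw [mem_EofD] at *
        simpa [mem_EofD] using ‹e' ∈ EofD D›
      · rw [card_orbits D e.1, hcard]
      · exact (connected_iff_span D (e.2 - e.1) hd).mpr hspan
    · rintro ⟨E, he, hinv, hcard, hconn⟩
      apply Subtype.ext
      simp only
      ext x
      rw [mem_EofD, ← Prod.mk.eta (p := x)]
      exact (invariant_mem_iff hinv e x.1 x.2).symm
    · rintro ⟨D, hd, hcard, hspan⟩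
      apply Subtype.ext
      simp only
      ext d
      show (e.1, e.1 + d) ∈ EofD D ↔ d ∈ D
      rw [mem_EofD]
      simp
  -- Step 2: difference sets ↔ spanning r-subsets avoiding 0
  have step2 : Nat.card {D : Set (Fin r → ZMod p) // (e.2 - e.1) ∈ D ∧ Nat.card D = r + 1 ∧
        span (ZMod p) ((· - (e.2 - e.1)) '' D) = ⊤} =
      Nat.card {W : Set (Fin r → ZMod p) // 0 ∉ W ∧ Nat.card W = r ∧ span (ZMod p) W = ⊤} := by
    apply Nat.card_congr
    refine ⟨fun x => ⟨((· - (e.2 - e.1)) '' x.1) \ {0}, ?_⟩, fun y => ⟨(· + (e.2 - e.1)) '' insert 0 y.1, ?_⟩,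
      ?_, ?_⟩
    · obtain ⟨D, hd, hcard, hspan⟩ := x
      have h0mem : (0 : Fin r → ZMod p) ∈ (· - (e.2 - e.1)) '' D := ⟨(e.2 - e.1), hd, sub_self (e.2 - e.1)⟩
      refine ⟨by simp, ?_, ?_⟩
      · rw [Nat.card_coe_set_eq] at hcard ⊢
        rw [Set.ncard_diff_singleton_of_mem h0mem,
          Set.ncard_image_of_injective _ sub_left_injective, hcard]
        omega
      · rw [← span_insert_zero (s := ((· - (e.2 - e.1)) '' D) \ {0}),
          Set.insert_diff_singleton, Set.insert_eq_self.mpr h0mem]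
        exact hspan
    · obtain ⟨W, h0, hcard, hspan⟩ := y
      have himg : (· - (e.2 - e.1)) '' ((· + (e.2 - e.1)) '' insert 0 W) = insert 0 W := by
        rw [← Set.image_comp]
        convert Set.image_id _
        ext x
        simp
      refine ⟨⟨0, Set.mem_insert 0 W, zero_add (e.2 - e.1)⟩, ?_, ?_⟩
      · rw [Nat.card_coe_set_eq] at hcard ⊢
        rw [Set.ncard_image_of_injective _ (add_left_injective (e.2 - e.1)),
          Set.ncard_insert_of_notMem h0, hcard]
      · rw [himg, span_insert_zero]
        exact hspan
    · rintro ⟨D, hd, hcard, hspan⟩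
      apply Subtype.ext
      simp only
      have h0mem : (0 : Fin r → ZMod p) ∈ (· - (e.2 - e.1)) '' D := ⟨(e.2 - e.1), hd, sub_self (e.2 - e.1)⟩
      rw [Set.insert_diff_singleton, Set.insert_eq_self.mpr h0mem, ← Set.image_comp]
      convert Set.image_id _
      ext x
      simp
    · rintro ⟨W, h0, hcard, hspan⟩
      apply Subtype.ext
      simp only
      have himg : (· - (e.2 - e.1)) '' ((· + (e.2 - e.1)) '' insert 0 W) = insert 0 W := by
        rw [← Set.image_comp]
        convert Set.image_id _
        ext x
        simp
      rw [himg, Set.insert_diff_self_of_notMem h0]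
  -- Step 3: linearly independent tuples ↔ sigma over spanning subsets
  have hfinrank : Module.finrank (ZMod p) (Fin r → ZMod p) = r := by
    rw [Module.finrank_fintype_fun_eq_card, Fintype.card_fin]
  haveI : Nonempty (Fin r) := ⟨⟨0, hr⟩⟩
  have hWli : ∀ (W : Set (Fin r → ZMod p)), Nat.card W = r → span (ZMod p) W = ⊤ →
      LinearIndependent (ZMod p) ((↑) : W → (Fin r → ZMod p)) := by
    intro W hcard hspan
    apply linearIndependent_of_top_le_span_of_card_eq_finrank
    · rw [Subtype.range_coe, hspan]
    · rw [← Nat.card_eq_fintype_card, hcard, hfinrank]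
  have step3 : Nat.card {v : Fin r → (Fin r → ZMod p) // LinearIndependent (ZMod p) v} =
      Nat.card {W : Set (Fin r → ZMod p) // 0 ∉ W ∧ Nat.card W = r ∧ span (ZMod p) W = ⊤} * r.factorial := by
    set SV := {W : Set (Fin r → ZMod p) // 0 ∉ W ∧ Nat.card W = r ∧ span (ZMod p) W = ⊤} with hSV
    set f : {v : Fin r → (Fin r → ZMod p) // LinearIndependent (ZMod p) v} → SV := fun x =>
      ⟨Set.range x.1, by
        rintro ⟨i, hi⟩
        exact x.2.ne_zero i hi, by
        rw [Nat.card_congr (Equiv.ofInjective x.1 x.2.injective).symm,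
          Nat.card_eq_fintype_card, Fintype.card_fin], by
        have hb := (basisOfLinearIndependentOfCardEqFinrank x.2
          (by rw [Fintype.card_fin, hfinrank])).span_eq
        rwa [coe_basisOfLinearIndependentOfCardEqFinrank] at hb⟩ with hf
    have e1 : {v : Fin r → (Fin r → ZMod p) // LinearIndependent (ZMod p) v} ≃ Σ W : SV, {x // f x = W} :=
      (Equiv.sigmaFiberEquiv f).symm
    have e2 : ∀ W : SV, {x // f x = W} ≃ (Fin r ≃ W.1) := by
      intro W
      obtain ⟨W, h0, hcard, hspan⟩ := W
      refine ⟨fun x => ((Equiv.ofInjective x.1.1 x.1.2.injective).trans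
          (Equiv.setCongr (congrArg Subtype.val x.2))), fun σ => ⟨⟨fun i => (σ i : Fin r → ZMod p), ?_⟩, ?_⟩,
          ?_, ?_⟩
      · exact (hWli W hcard hspan).comp σ σ.injective
      · apply Subtype.ext
        simp only [hf]
        ext x
        constructor
        · rintro ⟨i, rfl⟩; exact (σ i).2
        · intro hx; exact ⟨σ.symm ⟨x, hx⟩, by simp⟩
      · intro x
        apply Subtype.ext
        apply Subtype.ext
        funext i
        rfl
      · intro σ
        apply Equiv.ext
        intro i
        apply Subtype.ext
        rfl
    have e3 : (Σ W : SV, {x // f x = W}) ≃ SV × Equiv.Perm (Fin r) :=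
      (Equiv.sigmaCongrRight fun W => (e2 W).trans
        (Equiv.equivCongr (Equiv.refl (Fin r)) (Finite.equivFinOfCardEq W.2.2.1))).trans
        (Equiv.sigmaEquivProd SV (Equiv.Perm (Fin r)))
    rw [Nat.card_congr (e1.trans e3), Nat.card_prod]
    congr 1
    rw [Nat.card_eq_fintype_card, Fintype.card_perm, Fintype.card_fin]
  -- Step 4: count linearly independent tuples
  have step4 : Nat.card {v : Fin r → (Fin r → ZMod p) // LinearIndependent (ZMod p) v} =
      ∏ i ∈ Finset.range r, (p ^ r - p ^ i) := by
    have := card_linearIndependent (K := ZMod p) (V := Fin r → ZMod p) (k := r) (le_of_eq hfinrank.symm)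
    rw [this, ZMod.card, hfinrank]
    exact Fin.prod_univ_eq_prod_range (fun i => p ^ r - p ^ i) r
  rw [step1, step2, ← step3, step4]
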